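/- Let A be an n×n symmetric positive semidefinite matrix, p ∈ ℝⁿ with |p| = R > 0, and suppose α > 0 satisfies α ≤ R² · vᵀAv / (v·p)² for all v ∈ ℝⁿ with v·p ≠ 0. Set eₙ = p/|p| and C = A - 2α eₙ⊗eₙ. Then the 2n×2n block matrix [[A, C], [C, A]] is positive semidefinite. -/

import Mathlib

open Matrix

lemma aux_dot_vecMulVec {n : ℕ} (a b c d : Fin n → ℝ) :
    a ⬝ᵥ (Matrix.vecMulVec b c *ᵥ d) = (a ⬝ᵥ b) * (c ⬝ᵥ d) := by
  simp only [dotProduct, mulVec, vecMulVec_apply, Finset.sum_mul, Finset.mul_sum]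
  rw [Finset.sum_comm]
  exact Finset.sum_congr rfl fun i _ => Finset.sum_congr rfl fun j _ => by ring

/-- If `A ≥ 0`, `|p| = R > 0` and `α ≤ R² vᵀAv/(v·p)²` whenever `v·p ≠ 0`, then
with `e = p/|p|` and `C = A - 2α e⊗e`, the block matrix `[[A,C],[C,A]]` is
positive semidefinite. -/
theorem block_matrix_psd_of_structural_condition {n : ℕ}
    (A : Matrix (Fin n) (Fin n) ℝ) (hA : A.PosSemidef)
    (p : Fin n → ℝ) (R : ℝ) (hR : 0 < R) (hpR : Real.sqrt (p ⬝ᵥ p) = R)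
    (α : ℝ) (hα : 0 < α)
    (hcond : ∀ v : Fin n → ℝ, v ⬝ᵥ p ≠ 0 →
      α ≤ R ^ 2 * (v ⬝ᵥ (A *ᵥ v)) / (v ⬝ᵥ p) ^ 2) :
    (Matrix.fromBlocks A (A - (2 * α) • Matrix.vecMulVec (R⁻¹ • p) (R⁻¹ • p))
      (A - (2 * α) • Matrix.vecMulVec (R⁻¹ • p) (R⁻¹ • p)) A).PosSemidef := by
  have hRne : R ≠ 0 := ne_of_gt hR
  have hAt : Aᵀ = A := by
    have := hA.1
    rwa [Matrix.IsHermitian, conjTranspose_eq_transpose_of_trivial] at this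
  have hs : ∀ a b : Fin n → ℝ, a ⬝ᵥ (A *ᵥ b) = b ⬝ᵥ (A *ᵥ a) := by
    intro a b
    rw [Matrix.dotProduct_mulVec, ← Matrix.mulVec_transpose, hAt, dotProduct_comm]
  have hkey : ∀ u : Fin n → ℝ, α * (u ⬝ᵥ p) ^ 2 ≤ R ^ 2 * (u ⬝ᵥ (A *ᵥ u)) := by
    intro u
    by_cases h : u ⬝ᵥ p = 0
    · rw [h]
      simpa using mul_nonneg (by positivity : (0:ℝ) ≤ R ^ 2) (hA.dotProduct_mulVec_nonneg u)
    · have := hcond u h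
      rw [le_div_iff₀ (by positivity)] at this
      linarith
  have hvvt : (Matrix.vecMulVec (R⁻¹ • p) (R⁻¹ • p))ᵀ = Matrix.vecMulVec (R⁻¹ • p) (R⁻¹ • p) := by
    ext i j; simp [vecMulVec_apply, mul_comm]; ring
  rw [posSemidef_iff_dotProduct_mulVec]
  constructor
  · rw [Matrix.IsHermitian, conjTranspose_eq_transpose_of_trivial,
      fromBlocks_transpose, transpose_sub, hAt, transpose_smul, hvvt]
  · intro x
    have hx : x = Sum.elim (x ∘ Sum.inl) (x ∘ Sum.inr) := by
      ext i; cases i <;> rfl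
    set v := x ∘ Sum.inl
    set w := x ∘ Sum.inr
    rw [star_trivial, hx, fromBlocks_mulVec, sumElim_dotProduct_sumElim]
    simp only [Matrix.sub_mulVec, Matrix.smul_mulVec, dotProduct_sub,
      dotProduct_smul, dotProduct_add, aux_dot_vecMulVec, smul_eq_mul,
      dotProduct_smul, smul_dotProduct, Sum.elim_comp_inl, Sum.elim_comp_inr]
    rw [dotProduct_comm p w, dotProduct_comm p v]
    have hk := hkey (v + w)
    simp only [add_dotProduct, Matrix.mulVec_add, dotProduct_add] at hk
    have hR2 : (0:ℝ) < R ^ 2 := by positivity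
    have hfrac : ∀ c d : ℝ, R⁻¹ * c * (R⁻¹ * d) = c * d / R ^ 2 := by
      intro c d; rw [div_eq_mul_inv, ← inv_pow]; ring
    rw [hfrac, hfrac]
    have h1 : (v ⬝ᵥ p) * (w ⬝ᵥ p) / R ^ 2 * R ^ 2 = (v ⬝ᵥ p) * (w ⬝ᵥ p) :=
      div_mul_cancel₀ _ (ne_of_gt hR2)
    have h2 : (w ⬝ᵥ p) * (v ⬝ᵥ p) / R ^ 2 * R ^ 2 = (w ⬝ᵥ p) * (v ⬝ᵥ p) :=
      div_mul_cancel₀ _ (ne_of_gt hR2)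
    nlinarith [hk, h1, h2, mul_nonneg hα.le (sq_nonneg (v ⬝ᵥ p - w ⬝ᵥ p)), hR2]
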